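/- arXiv:0804.4716 — 2 statements merged into one kernel-verified Lean document; each statement's English description precedes it below -/
import Mathlib

section
/- For every folding pair (w,T) ∈ ℱ(λ), the filling f(w,T) is nonattacking; that is, f(ℱ(λ)) ⊆ T(λ,n). -/
open Finset

namespace Compress

attribute [local instance] Classical.propDecidable

noncomputable section

/-! ### Permutations of `{1,…,n}`, 1-based conventions -/

/-- The 1-based index `i ∈ {1,…,n}` as an element of `Fin n`. -/
def idx (n : ℕ) [NeZero n] (i : ℕ) : Fin n :=
  ⟨(i - 1) % n, Nat.mod_lt _ (Nat.pos_of_ne_zero (NeZero.ne n))⟩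

/-- The 1-based value `w(i) ∈ {1,…,n}` of a permutation `w ∈ S_n`. -/
def pv {n : ℕ} [NeZero n] (w : Equiv.Perm (Fin n)) (i : ℕ) : ℕ :=
  (w (idx n i)).val + 1

/-- The transposition `(i,k)` of `{1,…,n}` (1-based). -/
def tr (n : ℕ) [NeZero n] (i k : ℕ) : Equiv.Perm (Fin n) :=
  Equiv.swap (idx n i) (idx n k)

/-- The Coxeter length of `w ∈ S_n`, i.e. its number of inversions. -/
def len {n : ℕ} [NeZero n] (w : Equiv.Perm (Fin n)) : ℕ :=
  ((Finset.univ : Finset (Fin n × Fin n)).filter fun p => p.1 < p.2 ∧ w p.2 < w p.1).card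

/-- Right multiplication of `w` by a list of transpositions (given as 1-based pairs),
taken from left to right. -/
def applyTs {n : ℕ} [NeZero n] (w : Equiv.Perm (Fin n)) (L : List (ℕ × ℕ)) :
    Equiv.Perm (Fin n) :=
  L.foldl (fun u p => u * tr n p.1 p.2) w

/-! ### Subsequences of a list of transpositions, encoded by sets of positions -/

/-- The subsequence of the list `Δ` of transpositions occupying the (0-based) positions in `J`,
listed in increasing order of positions. -/
def pickP (Δ : List (ℕ × ℕ)) (J : Finset ℕ) : List (ℕ × ℕ) :=
  (J.sort (· ≤ ·)).map fun r => Δ.getD r (0, 0)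

/-- `w r_1 ⋯ r_s` where `r_1,…,r_s` is the subsequence of `Δ` at positions `J`. -/
def wT {n : ℕ} [NeZero n] (w : Equiv.Perm (Fin n)) (Δ : List (ℕ × ℕ)) (J : Finset ℕ) :
    Equiv.Perm (Fin n) :=
  applyTs w (pickP Δ J)

/-- The partial product `w r_1 ⋯ r_{a-1}` just before using the entry at position `r ∈ J`. -/
def stepPerm {n : ℕ} [NeZero n] (w : Equiv.Perm (Fin n)) (Δ : List (ℕ × ℕ)) (J : Finset ℕ)
    (r : ℕ) : Equiv.Perm (Fin n) :=
  applyTs w (pickP Δ (J.filter fun x => x < r))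

/-- The entry at position `r ∈ J` is positive in the increasing-length convention:
`ℓ(w r_1⋯r_{a−1}) < ℓ(w r_1⋯r_a)`. -/
def isPosInc {n : ℕ} [NeZero n] (w : Equiv.Perm (Fin n)) (Δ : List (ℕ × ℕ)) (J : Finset ℕ)
    (r : ℕ) : Prop :=
  len (stepPerm w Δ J r) <
    len (stepPerm w Δ J r * tr n (Δ.getD r (0, 0)).1 (Δ.getD r (0, 0)).2)

/-- The entry at position `r ∈ J` is positive in the decreasing-length convention
(a positive folding): `ℓ(w r_1⋯r_{a−1}) > ℓ(w r_1⋯r_a)`. -/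
def isPosDec {n : ℕ} [NeZero n] (w : Equiv.Perm (Fin n)) (Δ : List (ℕ × ℕ)) (J : Finset ℕ)
    (r : ℕ) : Prop :=
  len (stepPerm w Δ J r * tr n (Δ.getD r (0, 0)).1 (Δ.getD r (0, 0)).2) <
    len (stepPerm w Δ J r)

/-! ### The field `ℚ(q,t)` -/

/-- The field `ℚ(q,t)` of rational functions in two variables. -/
abbrev Kqt : Type := FractionRing (MvPolynomial (Fin 2) ℚ)

/-- The variable `q` of `ℚ(q,t)`. -/
def qq : Kqt := algebraMap (MvPolynomial (Fin 2) ℚ) Kqt (MvPolynomial.X 0)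

/-- The variable `t` of `ℚ(q,t)`. -/
def tt : Kqt := algebraMap (MvPolynomial (Fin 2) ℚ) Kqt (MvPolynomial.X 1)

/-! ### The partition λ, its diagram and statistics on fillings -/

/-- `conj n lam j = λ'_j`, the length of column `j`. -/
def conj (n : ℕ) (lam : ℕ → ℕ) (j : ℕ) : ℕ :=
  ((Finset.Icc 1 (n - 1)).filter fun i => j ≤ lam i).card

/-- The cells `(i,j)` of the Young diagram of λ: `1 ≤ i ≤ n−1`, `1 ≤ j ≤ λ_i`. -/
def cells (n : ℕ) (lam : ℕ → ℕ) : Finset (ℕ × ℕ) :=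
  (Finset.Icc 1 (n - 1) ×ˢ Finset.Icc 1 (lam 1)).filter fun c => c.2 ≤ lam c.1

/-- Two cells attack each other: same column, or consecutive columns with the
left-column cell strictly above the right-column cell (column `j+1` is left of column `j`). -/
def attack (u v : ℕ × ℕ) : Prop :=
  (u.2 = v.2 ∧ u.1 ≠ v.1) ∨ (u.2 = v.2 + 1 ∧ u.1 < v.1) ∨ (v.2 = u.2 + 1 ∧ v.1 < u.1)

/-- `u` comes before `v` in the reading order (columns right to left, i.e. column 1 first,
each column top to bottom). -/
def readBefore (u v : ℕ × ℕ) : Prop :=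
  u.2 < v.2 ∨ (u.2 = v.2 ∧ u.1 < v.1)

/-- σ is a nonattacking filling of λ with entries in `{1,…,n}`, i.e. `σ ∈ T(λ,n)`. -/
def NonAttacking (n : ℕ) (lam : ℕ → ℕ) (σ : ℕ × ℕ → ℕ) : Prop :=
  (∀ u ∈ cells n lam, σ u ∈ Finset.Icc 1 n) ∧
    ∀ u ∈ cells n lam, ∀ v ∈ cells n lam, attack u v → σ u ≠ σ v

/-- The descent set of a filling. -/
def DesSet (n : ℕ) (lam : ℕ → ℕ) (σ : ℕ × ℕ → ℕ) : Finset (ℕ × ℕ) :=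
  (cells n lam).filter fun u => (u.1, u.2 + 1) ∈ cells n lam ∧ σ (u.1, u.2 + 1) < σ u

/-- `Diff(σ)`. -/
def DiffSet (n : ℕ) (lam : ℕ → ℕ) (σ : ℕ × ℕ → ℕ) : Finset (ℕ × ℕ) :=
  (cells n lam).filter fun u => (u.1, u.2 + 1) ∈ cells n lam ∧ σ (u.1, u.2 + 1) ≠ σ u

/-- `arm(i,j) = λ_i − j`. -/
def armC (lam : ℕ → ℕ) (u : ℕ × ℕ) : ℕ := lam u.1 - u.2

/-- `leg(i,j) = λ'_j − i`. -/
def legC (n : ℕ) (lam : ℕ → ℕ) (u : ℕ × ℕ) : ℕ := conj n lam u.2 - u.1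

/-- `maj(σ) = Σ_{u ∈ Des(σ)} arm(u)`. -/
def majStat (n : ℕ) (lam : ℕ → ℕ) (σ : ℕ × ℕ → ℕ) : ℕ :=
  ∑ u ∈ DesSet n lam σ, armC lam u

/-- `|Inv(σ)|`: the number of pairs of attacking cells `u` before `v` in reading order
with `σ(u) > σ(v)`. -/
def invPairsL (n : ℕ) (lam : ℕ → ℕ) (σ : ℕ × ℕ → ℕ) : ℕ :=
  ((cells n lam ×ˢ cells n lam).filter fun x =>
    attack x.1 x.2 ∧ readBefore x.1 x.2 ∧ σ x.2 < σ x.1).card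

/-- `inv(σ) = |Inv(σ)| − Σ_{u ∈ Des(σ)} leg(u)`. -/
def invStat (n : ℕ) (lam : ℕ → ℕ) (σ : ℕ × ℕ → ℕ) : ℤ :=
  (invPairsL n lam σ : ℤ) - ∑ u ∈ DesSet n lam σ, (legC n lam u : ℤ)

/-- `n(λ) = Σ_i (i−1) λ_i`. -/
def nlam (n : ℕ) (lam : ℕ → ℕ) : ℕ :=
  ∑ i ∈ Finset.Icc 1 n, (i - 1) * lam i

/-- The Haglund–Haiman–Loehr-type weight of a filling:
`HHL(σ) = t^{n(λ)−inv(σ)} q^{maj(σ)} Π_{u∈Diff(σ)} (1−t)/(1−q^{arm(u)} t^{leg(u)+1})`. -/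
def HHL (n : ℕ) (lam : ℕ → ℕ) (σ : ℕ × ℕ → ℕ) : Kqt :=
  tt ^ ((nlam n lam : ℤ) - invStat n lam σ) * qq ^ majStat n lam σ *
    ∏ u ∈ DiffSet n lam σ, (1 - tt) / (1 - qq ^ armC lam u * tt ^ (legC n lam u + 1))

/-! ### The λ-chain Γ -/

/-- The row `(i,n),(i,n−1),…,(i,low)`. -/
def rowL (n i low : ℕ) : List (ℕ × ℕ) :=
  (List.range (n + 1 - low)).map fun r => (i, n - r)

/-- `Γ(k)`: rows `i = k, k−1, …, 1`, row `i` being `(i,n),…,(i,k+1)`. -/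
def GammaK (n k : ℕ) : List (ℕ × ℕ) :=
  (List.range k).flatMap fun s => rowL n (k - s) (k + 1)

/-- `Γ'(k)`: rows `i = k, k−1, …, 1`, row `i` being `(i,n),…,(i,k+2)`
(the last transposition `(i,k+1)` of each row of `Γ(k)` removed). -/
def GammaK' (n k : ℕ) : List (ℕ × ℕ) :=
  (List.range k).flatMap fun s => rowL n (k - s) (k + 2)

/-- The λ-chain `Γ = Γ_{λ_1} Γ_{λ_1−1} ⋯ Γ_2`, where `Γ_j = Γ'(λ'_j)` if
`j = min{i : λ'_i = λ'_j}` (equivalently `λ'_{j−1} ≠ λ'_j`) and `Γ_j = Γ(λ'_j)` otherwise.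
Each entry records its segment index `j` together with the root `(i,k)`. -/
def lamChain (n : ℕ) (lam : ℕ → ℕ) : List (ℕ × ℕ × ℕ) :=
  (List.range (lam 1 - 1)).flatMap fun s =>
    let j := lam 1 - s
    let seg :=
      if conj n lam (j - 1) = conj n lam j then GammaK n (conj n lam j)
      else GammaK' n (conj n lam j)
    seg.map fun p => (j, p.1, p.2)

/-- The underlying list of roots (transpositions) of the λ-chain. -/
def chainRoots (Γ : List (ℕ × ℕ × ℕ)) : List (ℕ × ℕ) := Γ.map fun e => e.2

/-! ### The Ram–Yip weight and the filling map -/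

/-- The Ram–Yip weight `RY(w,T)` of a folding pair, where `T` is the subsequence of the
λ-chain at positions `J`. -/
def RY (n : ℕ) [NeZero n] (lam : ℕ → ℕ) (w : Equiv.Perm (Fin n)) (J : Finset ℕ) : Kqt :=
  tt ^ (((len w : ℤ) - (len (wT w (chainRoots (lamChain n lam)) J) : ℤ) - (J.card : ℤ)) / 2) *
    (1 - tt) ^ J.card *
    ∏ r ∈ J,
      (let e := (lamChain n lam).getD r (0, 0, 0)
       let a := lam e.2.1 - (e.1 - 1)
       if isPosDec w (chainRoots (lamChain n lam)) J r then
         (1 - qq ^ a * tt ^ (e.2.2 - e.2.1))⁻¹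
       else qq ^ a * tt ^ (e.2.2 - e.2.1) * (1 - qq ^ a * tt ^ (e.2.2 - e.2.1))⁻¹)

/-- `π_j = w T_{λ_1} ⋯ T_{j+1}`: the product of `w` with the entries of `T` lying in the
segments of column index `> j`. -/
def pij (n : ℕ) [NeZero n] (lam : ℕ → ℕ) (w : Equiv.Perm (Fin n)) (J : Finset ℕ) (j : ℕ) :
    Equiv.Perm (Fin n) :=
  applyTs w (pickP (chainRoots (lamChain n lam))
    (J.filter fun r => j < ((lamChain n lam).getD r (0, 0, 0)).1))

/-- The filling map `f`: `f(w,T)(i,j) = π_j(i)` on cells of λ (and `0` off the diagram). -/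
def fmap (n : ℕ) [NeZero n] (lam : ℕ → ℕ) (w : Equiv.Perm (Fin n)) (J : Finset ℕ) :
    ℕ × ℕ → ℕ :=
  fun c => if c ∈ cells n lam then pv (pij n lam w J c.2) c.1 else 0

/-- The fiber `f⁻¹(σ)` of the filling map over σ, inside `ℱ(λ)`. -/
def fiberSet (n : ℕ) [NeZero n] (lam : ℕ → ℕ) (σ : ℕ × ℕ → ℕ) :
    Finset (Equiv.Perm (Fin n) × Finset ℕ) :=
  (Finset.univ ×ˢ (Finset.range (lamChain n lam).length).powerset).filter
    fun p => ∀ u ∈ cells n lam, fmap n lam p.1 p.2 u = σ u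

/-- The Finset of all nonattacking fillings `T(λ,n)` (normalized to vanish off the diagram). -/
def TFinset (n : ℕ) (lam : ℕ → ℕ) : Finset (ℕ × ℕ → ℕ) :=
  (((cells n lam).pi fun _ => Finset.Icc 1 n).image
      fun g c => if h : c ∈ cells n lam then g c h else 0).filter
    fun σ => NonAttacking n lam σ

/-- The monomial `x^{content(σ)} = x_1^{c_1} ⋯ x_n^{c_n}` in `ℚ(q,t)[x_1,…,x_n]`. -/
def contentMon (n : ℕ) [NeZero n] (lam : ℕ → ℕ) (σ : ℕ × ℕ → ℕ) :
    MvPolynomial (Fin n) Kqt :=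
  ∏ a ∈ Finset.Icc 1 n,
    (MvPolynomial.X (idx n a)) ^ (((cells n lam).filter fun c => σ c = a).card)

/-! ### The weight μ(T) and the content vector (for Statement 4) -/

/-- `l_r = #{r' ≤ r : β_{r'} = β_r}` for the `r`-th entry of the λ-chain (0-based positions). -/
def lcount (Γ : List (ℕ × ℕ × ℕ)) (r : ℕ) : ℕ :=
  ((List.range (r + 1)).filter fun r' => (Γ.getD r' (0, 0, 0)).2 = (Γ.getD r (0, 0, 0)).2).length

/-- The affine map `r̂_r : v ↦ v − (v_i − v_k − l_r)(e_i − e_k)` of `ℝⁿ`,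
for the `r`-th entry `(i,k)` of the λ-chain. -/
def hatr (n : ℕ) [NeZero n] (Γ : List (ℕ × ℕ × ℕ)) (r : ℕ) (v : Fin n → ℝ) : Fin n → ℝ :=
  fun x =>
    v x - (v (idx n (Γ.getD r (0, 0, 0)).2.1) - v (idx n (Γ.getD r (0, 0, 0)).2.2)
            - (lcount Γ r : ℝ)) *
      ((if x = idx n (Γ.getD r (0, 0, 0)).2.1 then (1 : ℝ) else 0) -
        (if x = idx n (Γ.getD r (0, 0, 0)).2.2 then (1 : ℝ) else 0))

/-- `μ(T) = r̂_{j_1} r̂_{j_2} ⋯ r̂_{j_s}(λ) ∈ ℝⁿ` for `T` the subsequence of the λ-chain at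
positions `J = {j_1 < … < j_s}`. -/
def muT (n : ℕ) [NeZero n] (lam : ℕ → ℕ) (J : Finset ℕ) : Fin n → ℝ :=
  (J.sort (· ≤ ·)).foldr (hatr n (lamChain n lam)) fun x => (lam (x.val + 1) : ℝ)

/-- The action of `S_n` on `ℝⁿ` by permuting coordinates: `(w(v))_{w(i)} = v_i`. -/
def wAct {n : ℕ} [NeZero n] (w : Equiv.Perm (Fin n)) (v : Fin n → ℝ) : Fin n → ℝ :=
  fun x => v (w⁻¹ x)

/-- The content vector of a filling, as an element of `ℝⁿ`. -/
def contentVec (n : ℕ) (lam : ℕ → ℕ) (σ : ℕ × ℕ → ℕ) : Fin n → ℝ :=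
  fun x => (((cells n lam).filter fun c => σ c = x.val + 1).card : ℝ)

/-! ### Row sums (Statements 5 and 6) -/

/-- The weight of a subsequence `T` (at positions `J`) of a list `Δ` of transpositions, in the
single-`q` setting: `t^{(ℓ(wT)−ℓ(w)−|T|)/2}(1−t)^{|T|} Π_{(i,k)∈T⁺} 1/(1−q t^{k−i})
Π_{(i,k)∈T⁻} q t^{k−i}/(1−q t^{k−i})`, positivity in the increasing-length convention. -/
def RYrow (n : ℕ) [NeZero n] (w : Equiv.Perm (Fin n)) (Δ : List (ℕ × ℕ)) (J : Finset ℕ) : Kqt :=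
  tt ^ (((len (wT w Δ J) : ℤ) - (len w : ℤ) - (J.card : ℤ)) / 2) * (1 - tt) ^ J.card *
    ∏ r ∈ J,
      (let e := Δ.getD r (0, 0)
       if isPosInc w Δ J r then (1 - qq * tt ^ (e.2 - e.1))⁻¹
       else qq * tt ^ (e.2 - e.1) * (1 - qq * tt ^ (e.2 - e.1))⁻¹)

/-- `Δ = ((1,p+2),(1,p+3),…,(1,n))`. -/
def delta5 (n p : ℕ) : List (ℕ × ℕ) :=
  (List.range (n - p - 1)).map fun r => (1, p + 2 + r)

/-- `Δ = ((i,p+1),(i,p+2),…,(i,n))`. -/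
def delta6 (n i p : ℕ) : List (ℕ × ℕ) :=
  (List.range (n - p)).map fun r => (i, p + 1 + r)

/-! ### The field `ℚ(q_1,…,q_p,t)` and two-column fillings (Statements 7, 9, 10) -/

/-- The field `ℚ(q_1,…,q_p,t)` of rational functions in `p+1` variables. -/
abbrev Kq (p : ℕ) : Type := FractionRing (MvPolynomial (Fin (p + 1)) ℚ)

/-- The variable `q_i` (for `1 ≤ i ≤ p`). -/
def qv (p i : ℕ) : Kq p :=
  algebraMap (MvPolynomial (Fin (p + 1)) ℚ) (Kq p)
    (MvPolynomial.X ⟨(i - 1) % (p + 1), Nat.mod_lt _ (Nat.succ_pos p)⟩)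

/-- The variable `t`. -/
def tv (p : ℕ) : Kq p :=
  algebraMap (MvPolynomial (Fin (p + 1)) ℚ) (Kq p) (MvPolynomial.X ⟨p, Nat.lt_succ_self p⟩)

/-- The multi-`q` weight of a subsequence `T` (at positions `J`) of `Δ`:
`t^{(ℓ(wT)−ℓ(w)−|T|)/2}(1−t)^{|T|} Π_{(i,k)∈T⁺} 1/(1−q_i t^{k−i})
Π_{(i,k)∈T⁻} q_i t^{k−i}/(1−q_i t^{k−i})`, positivity in the increasing-length convention. -/
def RYmulti (n p : ℕ) [NeZero n] (w : Equiv.Perm (Fin n)) (Δ : List (ℕ × ℕ)) (J : Finset ℕ) :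
    Kq p :=
  tv p ^ (((len (wT w Δ J) : ℤ) - (len w : ℤ) - (J.card : ℤ)) / 2) * (1 - tv p) ^ J.card *
    ∏ r ∈ J,
      (let e := Δ.getD r (0, 0)
       if isPosInc w Δ J r then (1 - qv p e.1 * tv p ^ (e.2 - e.1))⁻¹
       else qv p e.1 * tv p ^ (e.2 - e.1) * (1 - qv p e.1 * tv p ^ (e.2 - e.1))⁻¹)

/-- `Δ = ((1,p+1),…,(1,n),(2,p+1),…,(2,n),…,(p,p+1),…,(p,n))`. -/
def delta7 (n p : ℕ) : List (ℕ × ℕ) :=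
  (List.range p).flatMap fun s => (List.range (n - p)).map fun r => (s + 1, p + 1 + r)

/-- The cells of the two-column filling `C_2C_1`, with right column (column 1) of length `p'`
and left column (column 2) of length `p`. -/
def cells2 (p p' : ℕ) : Finset (ℕ × ℕ) :=
  (Finset.Icc 1 p' ×ˢ ({1} : Finset ℕ)) ∪ (Finset.Icc 1 p ×ˢ ({2} : Finset ℕ))

/-- The entry of the two-column filling `C_2C_1` at a cell. -/
def entry2 (C2 C1 : ℕ → ℕ) : ℕ × ℕ → ℕ :=
  fun c => if c.2 = 1 then C1 c.1 else C2 c.1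

/-- `|Inv(C_2C_1)|`: the number of pairs of attacking cells `u` before `v` in reading order
with `entry(u) > entry(v)`. -/
def invPairs2 (C2 C1 : ℕ → ℕ) (p p' : ℕ) : ℕ :=
  ((cells2 p p' ×ˢ cells2 p p').filter fun x =>
    attack x.1 x.2 ∧ readBefore x.1 x.2 ∧ entry2 C2 C1 x.2 < entry2 C2 C1 x.1).card

/-- `inv(C_2C_1) = |Inv(C_2C_1)| − Σ_{u ∈ Des(C_2C_1)} leg(u)` where
`Des(C_2C_1) = {(i,1) : i ≤ p, C_1(i) > C_2(i)}` and `leg(i,1) = p' − i`. -/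
def inv2 (C2 C1 : ℕ → ℕ) (p p' : ℕ) : ℤ :=
  (invPairs2 C2 C1 p p' : ℤ) -
    ∑ i ∈ (Finset.Icc 1 p).filter fun i => C2 i < C1 i, ((p' : ℤ) - (i : ℤ))

/-- `inv(C) = #{(i,k) : i < k, C(i) > C(k)}` for a single column `C` of length `p`. -/
def invColumn (C : ℕ → ℕ) (p : ℕ) : ℕ :=
  ((Finset.Icc 1 p ×ˢ Finset.Icc 1 p).filter fun x => x.1 < x.2 ∧ C x.2 < C x.1).card

end

end Compress

namespace Compress


section AuxProofs

open List

lemma idx_val {n : ℕ} [NeZero n] {a : ℕ} (ha : 1 ≤ a) (ha' : a ≤ n) :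
    (idx n a).val = a - 1 := by
  have h : a - 1 < n := by omega
  simp [idx, Nat.mod_eq_of_lt h]

lemma idx_ne {n : ℕ} [NeZero n] {a b : ℕ} (ha : 1 ≤ a) (ha' : a ≤ n) (hb : 1 ≤ b)
    (hb' : b ≤ n) (h : a ≠ b) : idx n a ≠ idx n b := by
  intro he
  have := congrArg Fin.val he
  rw [idx_val ha ha', idx_val hb hb'] at this
  omega

lemma pv_ne {n : ℕ} [NeZero n] (w : Equiv.Perm (Fin n)) {a b : ℕ} (ha : 1 ≤ a) (ha' : a ≤ n)
    (hb : 1 ≤ b) (hb' : b ≤ n) (h : a ≠ b) : pv w a ≠ pv w b := by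
  unfold pv
  intro he
  exact idx_ne ha ha' hb hb' h (w.injective (Fin.val_injective (by omega)))

lemma applyTs_append' {n : ℕ} [NeZero n] (w : Equiv.Perm (Fin n)) (L1 L2 : List (ℕ × ℕ)) :
    applyTs w (L1 ++ L2) = applyTs (applyTs w L1) L2 :=
  List.foldl_append

lemma applyTs_apply_eq {n : ℕ} [NeZero n] {L : List (ℕ × ℕ)} {x : Fin n}
    (w : Equiv.Perm (Fin n))
    (h : ∀ p ∈ L, idx n p.1 ≠ x ∧ idx n p.2 ≠ x) : applyTs w L x = w x := by
  induction L generalizing w with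
  | nil => rfl
  | cons p L ih =>
    have h1 := h p List.mem_cons_self
    have hrest : applyTs w (p :: L) = applyTs (w * tr n p.1 p.2) L := rfl
    rw [hrest, ih _ (fun q hq => h q (List.mem_cons_of_mem _ hq))]
    have hx : (tr n p.1 p.2) x = x :=
      Equiv.swap_apply_of_ne_of_ne (Ne.symm h1.1) (Ne.symm h1.2)
    rw [Equiv.Perm.mul_apply, hx]

lemma sort_union_append {A B : Finset ℕ} (h : ∀ a ∈ A, ∀ b ∈ B, a < b) :
    (A ∪ B).sort (· ≤ ·) = A.sort (· ≤ ·) ++ B.sort (· ≤ ·) := by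
  have hd : Disjoint A B := by
    rw [Finset.disjoint_left]
    intro a ha hb
    exact absurd (h a ha a hb) (lt_irrefl a)
  apply fun hp h1 h2 => List.Perm.eq_of_pairwise' (r := ((· ≤ ·) : ℕ → ℕ → Prop)) h1 h2 hp
  · rw [← Multiset.coe_eq_coe]
    have hco : ((A.sort (· ≤ ·) ++ B.sort (· ≤ ·) : List ℕ) : Multiset ℕ)
        = ((A.sort (· ≤ ·) : List ℕ) : Multiset ℕ) + ((B.sort (· ≤ ·) : List ℕ) : Multiset ℕ) :=
      rfl
    rw [hco, Finset.sort_eq, Finset.sort_eq, Finset.sort_eq,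
      ← Finset.disjUnion_eq_union A B hd]
    rfl
  · exact Finset.pairwise_sort _ _
  · show List.Pairwise _ _
    rw [List.pairwise_append]
    refine ⟨Finset.pairwise_sort _ _, Finset.pairwise_sort _ _, ?_⟩
    intro a ha b hb
    exact le_of_lt (h a ((Finset.mem_sort _).mp ha) b ((Finset.mem_sort _).mp hb))

lemma pickP_union {Δ : List (ℕ × ℕ)} {A B : Finset ℕ} (h : ∀ a ∈ A, ∀ b ∈ B, a < b) :
    pickP Δ (A ∪ B) = pickP Δ A ++ pickP Δ B := by
  unfold pickP
  rw [sort_union_append h, List.map_append]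

lemma mem_pickP {Δ : List (ℕ × ℕ)} {S : Finset ℕ} {p : ℕ × ℕ} (hp : p ∈ pickP Δ S) :
    ∃ r ∈ S, Δ.getD r (0, 0) = p := by
  unfold pickP at hp
  rw [List.mem_map] at hp
  obtain ⟨r, hr, he⟩ := hp
  exact ⟨r, (Finset.mem_sort _).mp hr, he⟩

lemma rowL_mem {n i low : ℕ} {p : ℕ × ℕ} (hp : p ∈ rowL n i low) :
    p.1 = i ∧ low ≤ p.2 ∧ p.2 ≤ n := by
  unfold rowL at hp
  rw [List.mem_map] at hp
  obtain ⟨r, hr, he⟩ := hp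
  rw [List.mem_range] at hr
  subst he
  exact ⟨rfl, by omega, by omega⟩

lemma GammaK_mem {n k : ℕ} {p : ℕ × ℕ} (hp : p ∈ GammaK n k) :
    1 ≤ p.1 ∧ p.1 ≤ k ∧ k + 1 ≤ p.2 ∧ p.2 ≤ n := by
  unfold GammaK at hp
  rw [List.mem_flatMap] at hp
  obtain ⟨s, hs, hp⟩ := hp
  rw [List.mem_range] at hs
  obtain ⟨h1, h2, h3⟩ := rowL_mem hp
  omega

lemma GammaK'_mem {n k : ℕ} {p : ℕ × ℕ} (hp : p ∈ GammaK' n k) :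
    1 ≤ p.1 ∧ p.1 ≤ k ∧ k + 2 ≤ p.2 ∧ p.2 ≤ n := by
  unfold GammaK' at hp
  rw [List.mem_flatMap] at hp
  obtain ⟨s, hs, hp⟩ := hp
  rw [List.mem_range] at hs
  obtain ⟨h1, h2, h3⟩ := rowL_mem hp
  omega

lemma flatRows_pairwise (n k low : ℕ) :
    ((List.range k).flatMap fun s => rowL n (k - s) low).Pairwise fun p q => q.1 ≤ p.1 := by
  rw [List.pairwise_flatMap]
  constructor
  · intro s _
    unfold rowL
    rw [List.pairwise_map]
    exact List.Pairwise.imp (fun _ => le_refl _) List.pairwise_lt_range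
  · refine List.Pairwise.imp ?_ List.pairwise_lt_range
    intro s1 s2 hs p hp q hq
    rw [(rowL_mem hp).1, (rowL_mem hq).1]
    omega

/-- The key ordering relation along the λ-chain: segment indices weakly decrease, and
within a segment row indices weakly decrease. -/
def Rc (e1 e2 : ℕ × ℕ × ℕ) : Prop := e2.1 < e1.1 ∨ (e1.1 = e2.1 ∧ e2.2.1 ≤ e1.2.1)

lemma lamChain_mem {n : ℕ} (lam : ℕ → ℕ) {e : ℕ × ℕ × ℕ} (he : e ∈ lamChain n lam) :
    1 ≤ e.2.1 ∧ e.2.1 ≤ conj n lam e.1 ∧ conj n lam e.1 + 1 ≤ e.2.2 ∧ e.2.2 ≤ n ∧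
      (conj n lam (e.1 - 1) ≠ conj n lam e.1 → conj n lam e.1 + 2 ≤ e.2.2) := by
  unfold lamChain at he
  simp only [List.mem_flatMap, List.mem_range, List.mem_map] at he
  obtain ⟨s, hs, p, hp, he⟩ := he
  subst he
  simp only
  by_cases hc : conj n lam (lam 1 - s - 1) = conj n lam (lam 1 - s)
  · rw [if_pos hc] at hp
    obtain ⟨h1, h2, h3, h4⟩ := GammaK_mem hp
    exact ⟨h1, h2, h3, h4, fun hcon => absurd hc hcon⟩
  · rw [if_neg hc] at hp
    obtain ⟨h1, h2, h3, h4⟩ := GammaK'_mem hp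
    exact ⟨h1, h2, by omega, h4, fun _ => h3⟩

lemma lamChain_pairwise (n : ℕ) (lam : ℕ → ℕ) : (lamChain n lam).Pairwise Rc := by
  unfold lamChain
  rw [List.pairwise_flatMap]
  constructor
  · intro s _
    simp only
    rw [List.pairwise_map]
    have h1 : (if conj n lam (lam 1 - s - 1) = conj n lam (lam 1 - s) then
        GammaK n (conj n lam (lam 1 - s)) else
        GammaK' n (conj n lam (lam 1 - s))).Pairwise (fun p q => q.1 ≤ p.1) := by
      split
      · unfold GammaK
        exact flatRows_pairwise n _ _
      · unfold GammaK'
        exact flatRows_pairwise n _ _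
    exact h1.imp fun h => Or.inr ⟨rfl, h⟩
  · refine List.Pairwise.imp_of_mem ?_ List.pairwise_lt_range
    intro s1 s2 hs1 hs2 h12 x hx y hy
    rw [List.mem_range] at hs1 hs2
    simp only [List.mem_map] at hx hy
    obtain ⟨p, _, hpx⟩ := hx
    obtain ⟨q, _, hqy⟩ := hy
    subst hpx
    subst hqy
    left
    simp only
    omega

lemma lamChain_rel {n : ℕ} {lam : ℕ → ℕ} {r1 r2 : ℕ} (h12 : r1 < r2)
    (h2 : r2 < (lamChain n lam).length) :
    Rc ((lamChain n lam).getD r1 (0, 0, 0)) ((lamChain n lam).getD r2 (0, 0, 0)) := by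
  rw [List.getD_eq_getElem _ _ (h12.trans h2), List.getD_eq_getElem _ _ h2]
  exact List.pairwise_iff_getElem.mp (lamChain_pairwise n lam) r1 r2 _ h2 h12

lemma lamChain_getD_mem {n : ℕ} {lam : ℕ → ℕ} {r : ℕ} (hr : r < (lamChain n lam).length) :
    (lamChain n lam).getD r (0, 0, 0) ∈ lamChain n lam := by
  rw [List.getD_eq_getElem _ _ hr]
  exact List.getElem_mem _

lemma chainRoots_getD {Γ : List (ℕ × ℕ × ℕ)} {r : ℕ} (hr : r < Γ.length) :
    (chainRoots Γ).getD r (0, 0) = (Γ.getD r (0, 0, 0)).2 := by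
  unfold chainRoots
  rw [List.getD_eq_getElem _ _ (by simpa using hr), List.getD_eq_getElem _ _ hr,
    List.getElem_map]

lemma lam_lt_of_lt {n : ℕ} {lam : ℕ → ℕ} (hreg : ∀ i, 1 ≤ i → i < n → lam (i + 1) < lam i)
    {a b : ℕ} (ha : 1 ≤ a) (hab : a < b) (hb : b ≤ n) : lam b < lam a := by
  induction b with
  | zero => omega
  | succ b ih =>
    rcases Nat.lt_or_ge a b with h | h
    · exact lt_trans (hreg b (by omega) (by omega)) (ih h (by omega))
    · have hba : a = b := by omega
      subst hba
      exact hreg a ha (by omega)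

lemma conj_le_card {n : ℕ} {lam : ℕ → ℕ} (j : ℕ) : conj n lam j ≤ n - 1 := by
  unfold conj
  calc _ ≤ (Finset.Icc 1 (n - 1)).card := Finset.card_filter_le _ _
  _ = n - 1 := by rw [Nat.card_Icc]; omega

lemma le_conj {n : ℕ} {lam : ℕ → ℕ} (hreg : ∀ i, 1 ≤ i → i < n → lam (i + 1) < lam i)
    {k j : ℕ} (hk1 : 1 ≤ k) (hk2 : k ≤ n - 1) (hj : j ≤ lam k) : k ≤ conj n lam j := by
  unfold conj
  have h1 : k ≤ (Finset.Icc 1 k).card := by rw [Nat.card_Icc]; omega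
  refine h1.trans (Finset.card_le_card fun i hi => ?_)
  rw [Finset.mem_Icc] at hi
  rw [Finset.mem_filter, Finset.mem_Icc]
  refine ⟨⟨hi.1, by omega⟩, ?_⟩
  rcases Nat.lt_or_ge i k with h | h
  · exact le_trans hj (le_of_lt (lam_lt_of_lt hreg hi.1 h (by omega)))
  · have hik : i = k := by omega
    subst hik
    exact hj

lemma filter_card_le_succ {α : Type*} [DecidableEq α] (s : Finset α) (P Q : α → Prop)
    (iP : DecidablePred P) (iQ : DecidablePred Q) (f : α → ℕ) (j : ℕ)
    (hPQ : ∀ i ∈ s, P i → Q i ∨ f i = j)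
    (hinj : ∀ a ∈ s, ∀ b ∈ s, f a = j → f b = j → a = b) :
    (@Finset.filter α P iP s).card ≤ (@Finset.filter α Q iQ s).card + 1 := by
  classical
  have hsub : @Finset.filter α P iP s ⊆ @Finset.filter α Q iQ s ∪ s.filter (fun i => f i = j) := by
    intro i hi
    rw [Finset.mem_filter] at hi
    rw [Finset.mem_union, Finset.mem_filter, Finset.mem_filter]
    rcases hPQ i hi.1 hi.2 with h | h
    · exact Or.inl ⟨hi.1, h⟩
    · exact Or.inr ⟨hi.1, h⟩
  have hone : (s.filter (fun i => f i = j)).card ≤ 1 := by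
    rw [Finset.card_le_one]
    intro a ha b hb
    rw [Finset.mem_filter] at ha hb
    exact hinj a ha.1 b hb.1 ha.2 hb.2
  calc (@Finset.filter α P iP s).card ≤ _ := Finset.card_le_card hsub
  _ ≤ _ + _ := Finset.card_union_le _ _
  _ ≤ _ := by omega

lemma conj_le_succ {n : ℕ} {lam : ℕ → ℕ} (hreg : ∀ i, 1 ≤ i → i < n → lam (i + 1) < lam i)
    (j : ℕ) : conj n lam j ≤ conj n lam (j + 1) + 1 := by
  unfold conj
  refine filter_card_le_succ _ _ _ _ _ lam j (fun i _ hP => by omega) ?_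
  intro a ha b hb hfa hfb
  rw [Finset.mem_Icc] at ha hb
  by_contra hne
  rcases Nat.lt_or_ge a b with h | h
  · have := lam_lt_of_lt hreg ha.1 h (by omega)
    omega
  · have hba : b < a := by omega
    have := lam_lt_of_lt hreg hb.1 hba (by omega)
    omega

lemma mem_cells {n : ℕ} {lam : ℕ → ℕ} {c : ℕ × ℕ} (hc : c ∈ cells n lam) :
    1 ≤ c.1 ∧ c.1 ≤ n - 1 ∧ 1 ≤ c.2 ∧ c.2 ≤ lam c.1 := by
  unfold cells at hc
  rw [Finset.mem_filter, Finset.mem_product, Finset.mem_Icc, Finset.mem_Icc] at hc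
  exact ⟨hc.1.1.1, hc.1.1.2, hc.1.2.1, hc.2⟩

/-- Core splitting argument: if the positions split as `(A ∪ B) ∪ C` with `A < B < C`,
the `B`-part avoids `x`, and the `C`-part avoids `y`, then the two products differ at
`x` resp. `y` whenever `x ≠ y`. -/
lemma core_ne {n : ℕ} [NeZero n] (w : Equiv.Perm (Fin n)) (Δ : List (ℕ × ℕ))
    (S1 S0 A B C : Finset ℕ) (h1 : S1 = A) (h0 : S0 = (A ∪ B) ∪ C)
    (hAB : ∀ a ∈ A, ∀ b ∈ B, a < b) (hABC : ∀ a ∈ A ∪ B, ∀ c ∈ C, a < c)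
    (x y : Fin n) (hxy : x ≠ y)
    (hB : ∀ p ∈ pickP Δ B, idx n p.1 ≠ x ∧ idx n p.2 ≠ x)
    (hC : ∀ p ∈ pickP Δ C, idx n p.1 ≠ y ∧ idx n p.2 ≠ y) :
    applyTs w (pickP Δ S1) x ≠ applyTs w (pickP Δ S0) y := by
  rw [h1, h0]
  rw [pickP_union hABC, applyTs_append', pickP_union hAB, applyTs_append']
  rw [applyTs_apply_eq _ hC]
  have hx : applyTs (applyTs w (pickP Δ A)) (pickP Δ B) x = applyTs w (pickP Δ A) x :=
    applyTs_apply_eq _ hB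
  rw [← hx]
  intro h
  exact hxy (Equiv.injective _ h)

/-- The main combinatorial step: entries of attacking cells in consecutive columns differ. -/
lemma fmap_ne_of_attack {n : ℕ} [NeZero n] {lam : ℕ → ℕ}
    (hreg : ∀ i, 1 ≤ i → i < n → lam (i + 1) < lam i)
    (w : Equiv.Perm (Fin n)) (J : Finset ℕ) (hJ : J ⊆ Finset.range (lamChain n lam).length)
    {u v : ℕ × ℕ} (hu : u ∈ cells n lam) (hv : v ∈ cells n lam)
    (h2 : u.2 = v.2 + 1) (h1 : u.1 < v.1) :
    fmap n lam w J u ≠ fmap n lam w J v := by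
  obtain ⟨hu1, hu2, hu3, hu4⟩ := mem_cells hu
  obtain ⟨hv1, hv2, hv3, hv4⟩ := mem_cells hv
  have hn1 : 1 ≤ n := Nat.pos_of_ne_zero (NeZero.ne n)
  have hiconj : u.1 ≤ conj n lam (v.2 + 1) := le_conj hreg hu1 hu2 (h2 ▸ hu4)
  have hkconj : v.1 ≤ conj n lam v.2 := le_conj hreg hv1 hv2 hv4
  have hcs : conj n lam v.2 ≤ conj n lam (v.2 + 1) + 1 := conj_le_succ hreg v.2
  set J1 := J.filter (fun r => v.2 + 1 < ((lamChain n lam).getD r (0, 0, 0)).1) with hJ1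
  set E := J.filter (fun r => ((lamChain n lam).getD r (0, 0, 0)).1 = v.2 + 1 ∧
    v.1 ≤ ((lamChain n lam).getD r (0, 0, 0)).2.1) with hE
  set F := J.filter (fun r => ((lamChain n lam).getD r (0, 0, 0)).1 = v.2 + 1 ∧
    ((lamChain n lam).getD r (0, 0, 0)).2.1 < v.1) with hF
  have hmemJ : ∀ r ∈ J, r < (lamChain n lam).length := fun r hr => Finset.mem_range.mp (hJ hr)
  have hlt1 : ∀ a ∈ J1, ∀ b ∈ E, a < b := by
    intro a ha b hb
    rw [hJ1, Finset.mem_filter] at ha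
    rw [hE, Finset.mem_filter] at hb
    by_contra hle
    rcases Nat.lt_or_ge b a with h | h
    · have hrel := lamChain_rel h (hmemJ a ha.1)
      unfold Rc at hrel
      omega
    · have hab : a = b := by omega
      subst hab
      omega
  have hlt2 : ∀ a ∈ J1 ∪ E, ∀ b ∈ F, a < b := by
    intro a ha b hb
    rw [Finset.mem_union] at ha
    rw [hF, Finset.mem_filter] at hb
    by_contra hle
    rcases ha with ha | ha
    · rw [hJ1, Finset.mem_filter] at ha
      rcases Nat.lt_or_ge b a with h | h
      · have hrel := lamChain_rel h (hmemJ a ha.1)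
        unfold Rc at hrel
        omega
      · have hab : a = b := by omega
        subst hab
        omega
    · rw [hE, Finset.mem_filter] at ha
      rcases Nat.lt_or_ge b a with h | h
      · have hrel := lamChain_rel h (hmemJ a ha.1)
        unfold Rc at hrel
        omega
      · have hab : a = b := by omega
        subst hab
        omega
  have hcore : pij n lam w J (v.2 + 1) (idx n u.1) ≠ pij n lam w J v.2 (idx n v.1) := by
    unfold pij
    refine core_ne w _ _ _ J1 E F ?_ ?_ hlt1 hlt2 _ _
      (idx_ne hu1 (by omega) hv1 (by omega) (by omega)) ?_ ?_
    · ext r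
      rw [hJ1]
      try simp only [Finset.mem_filter]
    · ext r
      rw [hJ1, hE, hF]
      simp only [Finset.mem_filter, Finset.mem_union]
      constructor
      · rintro ⟨hrJ, hs⟩
        by_cases hgt : v.2 + 1 < ((lamChain n lam).getD r (0, 0, 0)).1
        · exact Or.inl (Or.inl ⟨hrJ, hgt⟩)
        · have heq : ((lamChain n lam).getD r (0, 0, 0)).1 = v.2 + 1 := by omega
          by_cases hrow : v.1 ≤ ((lamChain n lam).getD r (0, 0, 0)).2.1
          · exact Or.inl (Or.inr ⟨hrJ, heq, hrow⟩)
          · exact Or.inr ⟨hrJ, heq, by omega⟩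
      · rintro ((⟨hrJ, h⟩ | ⟨hrJ, h, _⟩) | ⟨hrJ, h, _⟩) <;> exact ⟨hrJ, by omega⟩
    · intro p hp
      obtain ⟨r, hrE, hpe⟩ := mem_pickP hp
      rw [hE, Finset.mem_filter] at hrE
      have hr : r < (lamChain n lam).length := hmemJ r hrE.1
      rw [chainRoots_getD hr] at hpe
      subst hpe
      have spec := lamChain_mem lam (lamChain_getD_mem hr)
      have hcle := conj_le_card (n := n) (lam := lam) ((lamChain n lam).getD r (0, 0, 0)).1
      obtain ⟨hs1, hs2, hs3, hs4, _⟩ := spec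
      obtain ⟨he1, he2⟩ := hrE.2
      constructor
      · exact idx_ne (by omega) (by omega) hu1 (by omega) (by omega)
      · refine idx_ne (by omega) hs4 hu1 (by omega) ?_
        rw [he1] at hs3
        omega
    · intro p hp
      obtain ⟨r, hrF, hpe⟩ := mem_pickP hp
      rw [hF, Finset.mem_filter] at hrF
      have hr : r < (lamChain n lam).length := hmemJ r hrF.1
      rw [chainRoots_getD hr] at hpe
      subst hpe
      have spec := lamChain_mem lam (lamChain_getD_mem hr)
      have hcle := conj_le_card (n := n) (lam := lam) ((lamChain n lam).getD r (0, 0, 0)).1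
      obtain ⟨hs1, hs2, hs3, hs4, hs5⟩ := spec
      obtain ⟨he1, he2⟩ := hrF.2
      constructor
      · exact idx_ne (by omega) (by omega) hv1 (by omega) (by omega)
      · refine idx_ne (by omega) hs4 hv1 (by omega) ?_
        by_cases hc : conj n lam v.2 = conj n lam (v.2 + 1)
        · rw [he1] at hs3
          omega
        · have hge := hs5 (by rw [he1, Nat.add_sub_cancel]; exact fun hh => hc hh)
          rw [he1] at hge
          omega
  intro hEq
  unfold fmap at hEq
  rw [if_pos hu, if_pos hv] at hEq
  unfold pv at hEq
  rw [h2] at hEq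
  exact hcore (Fin.val_injective (by omega))

end AuxProofs

/-- For every folding pair `(w,T) ∈ ℱ(λ)`, the filling `f(w,T)` is a
nonattacking filling with entries in `{1,…,n}`; that is, `f(ℱ(λ)) ⊆ T(λ,n)`. -/
theorem fmap_nonattacking (n : ℕ) [NeZero n] (hn : 2 ≤ n) (lam : ℕ → ℕ)
    (hreg : ∀ i, 1 ≤ i → i < n → lam (i + 1) < lam i) (hzero : lam n = 0)
    (w : Equiv.Perm (Fin n)) (J : Finset ℕ)
    (hJ : J ⊆ Finset.range (lamChain n lam).length) :
    NonAttacking n lam (fmap n lam w J) := by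
  have hn1 : 1 ≤ n := Nat.pos_of_ne_zero (NeZero.ne n)
  constructor
  · intro u hu
    unfold fmap
    rw [if_pos hu]
    unfold pv
    rw [Finset.mem_Icc]
    have := (pij n lam w J u.2 (idx n u.1)).isLt
    omega
  · intro u hu v hv hatt
    rcases hatt with ⟨hc, hne⟩ | ⟨ha, hb⟩ | ⟨ha, hb⟩
    · obtain ⟨hu1, hu2, _, _⟩ := mem_cells hu
      obtain ⟨hv1, hv2, _, _⟩ := mem_cells hv
      unfold fmap
      rw [if_pos hu, if_pos hv, hc]
      exact pv_ne _ hu1 (by omega) hv1 (by omega) hne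
    · exact fmap_ne_of_attack hreg w J hJ hu hv ha hb
    · exact (fmap_ne_of_attack hreg w J hJ hv hu ha hb).symm

end Compress
end

section
/- Let C_1 and C_2 be sequences of length p with entries in {1,…,n} such that the two-column filling C_2C_1 is nonattacking. For pairs 1 ≤ i < k ≤ p consider the two conditions (D1): C_1(i) > C_1(k), and (D2): C_1(k) > C_2(i). Let N_{d∧d} be the number of pairs satisfying both (D1) and (D2), let N_{a∧a} be the number of pairs satisfying neither, and let L = Σ_{i : C_1(i) > C_2(i)} (p − i). Then C(p,2) − inv(C_2C_1) − L + inv(C_2) = N_{a∧a} − N_{d∧d}, where C(p,2) is the binomial coefficient p choose 2. -/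
open Finset

namespace Compress

attribute [local instance] Classical.propDecidable

end Compress


namespace Compress

private lemma split2' {α : Type*} (s : Finset α) (P R : α → Prop)
    [DecidablePred P] [DecidablePred R] :
    (s.filter fun x => P x).card
      = (s.filter fun x => P x ∧ R x).card + (s.filter fun x => P x ∧ ¬ R x).card := by
  classical
  have h := Finset.card_filter_add_card_filter_not
    (s := s.filter fun x => P x) (p := R)
  rw [Finset.filter_filter, Finset.filter_filter] at h
  omega

private lemma split3' {α : Type*} (s : Finset α) (P Q R : α → Prop)
    [DecidablePred P] [DecidablePred Q] [DecidablePred R] :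
    (s.filter fun x => P x ∧ Q x).card
      = (s.filter fun x => P x ∧ Q x ∧ R x).card
        + (s.filter fun x => P x ∧ Q x ∧ ¬ R x).card := by
  classical
  have h := Finset.card_filter_add_card_filter_not
    (s := s.filter fun x => P x ∧ Q x) (p := R)
  rw [Finset.filter_filter, Finset.filter_filter] at h
  have e1 : (s.filter fun x => (P x ∧ Q x) ∧ R x)
      = (s.filter fun x => P x ∧ Q x ∧ R x) := Finset.filter_congr fun x _ => by tauto
  have e2 : (s.filter fun x => (P x ∧ Q x) ∧ ¬ R x)
      = (s.filter fun x => P x ∧ Q x ∧ ¬ R x) := Finset.filter_congr fun x _ => by tauto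
  rw [e1, e2] at h
  omega

private lemma card_lt_pairs (p : ℕ) :
    (((Finset.Icc 1 p) ×ˢ (Finset.Icc 1 p)).filter fun x : ℕ × ℕ => x.1 < x.2).card
      = p.choose 2 := by
  induction p with
  | zero => simp
  | succ p ih =>
    have hset : (((Finset.Icc 1 (p+1)) ×ˢ (Finset.Icc 1 (p+1))).filter
          fun x : ℕ × ℕ => x.1 < x.2)
        = (((Finset.Icc 1 p) ×ˢ (Finset.Icc 1 p)).filter fun x : ℕ × ℕ => x.1 < x.2)
          ∪ (Finset.Icc 1 p).image (fun i => (i, p+1)) := by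
      ext ⟨i, k⟩
      simp only [Finset.mem_filter, Finset.mem_product, Finset.mem_Icc, Finset.mem_union,
        Finset.mem_image, Prod.mk.injEq]
      constructor
      · rintro ⟨⟨⟨h1, h2⟩, h3, h4⟩, h5⟩
        by_cases hk : k = p + 1
        · right; exact ⟨i, by omega, rfl, hk.symm⟩
        · left; omega
      · rintro (⟨⟨⟨h1, h2⟩, h3, h4⟩, h5⟩ | ⟨a, ⟨h1, h2⟩, h3, h4⟩) <;> omega
    have hdisj : Disjoint
        (((Finset.Icc 1 p) ×ˢ (Finset.Icc 1 p)).filter fun x : ℕ × ℕ => x.1 < x.2)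
        ((Finset.Icc 1 p).image (fun i => (i, p+1))) := by
      rw [Finset.disjoint_left]
      rintro ⟨i, k⟩ hmem himg
      simp only [Finset.mem_filter, Finset.mem_product, Finset.mem_Icc] at hmem
      simp only [Finset.mem_image, Prod.mk.injEq, Finset.mem_Icc] at himg
      obtain ⟨a, _, _, h⟩ := himg
      omega
    rw [hset, Finset.card_union_of_disjoint hdisj, ih,
      Finset.card_image_of_injective _ (fun a b h => by simpa using h), Nat.card_Icc]
    simp [Nat.choose]
    omega

private lemma invPairs2_decomp (p : ℕ) (C1 C2 : ℕ → ℕ) :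
    invPairs2 C2 C1 p p
      = (((Finset.Icc 1 p) ×ˢ (Finset.Icc 1 p)).filter
          fun x => x.1 < x.2 ∧ C1 x.2 < C1 x.1).card
        + (((Finset.Icc 1 p) ×ˢ (Finset.Icc 1 p)).filter
          fun x => x.1 < x.2 ∧ C2 x.1 < C1 x.2).card
        + (((Finset.Icc 1 p) ×ˢ (Finset.Icc 1 p)).filter
          fun x => x.1 < x.2 ∧ C2 x.2 < C2 x.1).card := by
  classical
  have hset : ((cells2 p p ×ˢ cells2 p p).filter fun x =>
      attack x.1 x.2 ∧ readBefore x.1 x.2 ∧ entry2 C2 C1 x.2 < entry2 C2 C1 x.1)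
      = ((((Finset.Icc 1 p) ×ˢ (Finset.Icc 1 p)).filter
            fun x => x.1 < x.2 ∧ C1 x.2 < C1 x.1).image
          (fun x => ((x.1, 1), (x.2, 1))))
        ∪ ((((Finset.Icc 1 p) ×ˢ (Finset.Icc 1 p)).filter
            fun x => x.1 < x.2 ∧ C2 x.1 < C1 x.2).image
          (fun x => ((x.2, 1), (x.1, 2))))
        ∪ ((((Finset.Icc 1 p) ×ˢ (Finset.Icc 1 p)).filter
            fun x => x.1 < x.2 ∧ C2 x.2 < C2 x.1).image
          (fun x => ((x.1, 2), (x.2, 2)))) := by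
    ext ⟨⟨i, a⟩, ⟨k, b⟩⟩
    rw [Finset.mem_filter]
    simp only [Finset.mem_filter, Finset.mem_product, Finset.mem_union, Finset.mem_image,
      Finset.mem_Icc, Finset.mem_singleton, cells2, attack, readBefore, entry2]
    constructor
    · rintro ⟨⟨hu, hv⟩, hatk, hread, hent⟩
      have ha : a = 1 ∨ a = 2 := by omega
      have hb : b = 1 ∨ b = 2 := by omega
      rcases ha with ha | ha <;> rcases hb with hb | hb <;> subst ha <;> subst hb <;>
        norm_num at hent hatk hread
      · refine Or.inl (Or.inl ⟨⟨i, k⟩, ?_, rfl⟩)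
        simp only [Finset.mem_filter, Finset.mem_product, Finset.mem_Icc]
        omega
      · refine Or.inl (Or.inr ⟨⟨k, i⟩, ?_, rfl⟩)
        simp only [Finset.mem_filter, Finset.mem_product, Finset.mem_Icc]
        omega
      · refine Or.inr ⟨⟨i, k⟩, ?_, rfl⟩
        simp only [Finset.mem_filter, Finset.mem_product, Finset.mem_Icc]
        omega
    · rintro ((⟨⟨x, y⟩, hmem, heq⟩ | ⟨⟨x, y⟩, hmem, heq⟩) | ⟨⟨x, y⟩, hmem, heq⟩) <;>
      · simp only [Prod.mk.injEq] at heq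
        obtain ⟨⟨rfl, rfl⟩, rfl, rfl⟩ := heq
        simp only [Finset.mem_filter, Finset.mem_product, Finset.mem_Icc] at hmem
        norm_num
        omega
  have hinj1 : Function.Injective (fun x : ℕ × ℕ => ((x.1, 1), (x.2, 1))) := by
    intro x y h
    simp only [Prod.mk.injEq] at h
    exact Prod.ext h.1.1 h.2.1
  have hinj2 : Function.Injective (fun x : ℕ × ℕ => ((x.2, 1), (x.1, 2))) := by
    intro x y h
    simp only [Prod.mk.injEq] at h
    exact Prod.ext h.2.1 h.1.1
  have hinj3 : Function.Injective (fun x : ℕ × ℕ => ((x.1, 2), (x.2, 2))) := by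
    intro x y h
    simp only [Prod.mk.injEq] at h
    exact Prod.ext h.1.1 h.2.1
  have hd12 : Disjoint
      ((((Finset.Icc 1 p) ×ˢ (Finset.Icc 1 p)).filter
          fun x => x.1 < x.2 ∧ C1 x.2 < C1 x.1).image (fun x => ((x.1, 1), (x.2, 1))))
      ((((Finset.Icc 1 p) ×ˢ (Finset.Icc 1 p)).filter
          fun x => x.1 < x.2 ∧ C2 x.1 < C1 x.2).image (fun x => ((x.2, 1), (x.1, 2)))) := by
    rw [Finset.disjoint_left]
    rintro ⟨⟨u1, ua⟩, u2, ub⟩ h1 h2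
    simp only [Finset.mem_image, Prod.mk.injEq] at h1 h2
    obtain ⟨x, _, hx⟩ := h1
    obtain ⟨y, _, hy⟩ := h2
    omega
  have hd3 : Disjoint
      (((((Finset.Icc 1 p) ×ˢ (Finset.Icc 1 p)).filter
          fun x => x.1 < x.2 ∧ C1 x.2 < C1 x.1).image (fun x => ((x.1, 1), (x.2, 1))))
        ∪ ((((Finset.Icc 1 p) ×ˢ (Finset.Icc 1 p)).filter
          fun x => x.1 < x.2 ∧ C2 x.1 < C1 x.2).image (fun x => ((x.2, 1), (x.1, 2)))))
      ((((Finset.Icc 1 p) ×ˢ (Finset.Icc 1 p)).filter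
          fun x => x.1 < x.2 ∧ C2 x.2 < C2 x.1).image (fun x => ((x.1, 2), (x.2, 2)))) := by
    rw [Finset.disjoint_left]
    rintro ⟨⟨u1, ua⟩, u2, ub⟩ h1 h2
    simp only [Finset.mem_union, Finset.mem_image, Prod.mk.injEq] at h1 h2
    obtain ⟨y, _, hy⟩ := h2
    rcases h1 with ⟨x, _, hx⟩ | ⟨x, _, hx⟩ <;> omega
  rw [invPairs2, hset, Finset.card_union_of_disjoint hd3,
    Finset.card_union_of_disjoint hd12,
    Finset.card_image_of_injective _ hinj1,
    Finset.card_image_of_injective _ hinj2,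
    Finset.card_image_of_injective _ hinj3]

end Compress


namespace Compress

/-- For a nonattacking two-column filling `C_2C_1` with both columns of
length `p`: `C(p,2) − inv(C_2C_1) − L + inv(C_2) = N_{a∧a} − N_{d∧d}`, where `L` is the sum
of the legs of the descents, `N_{d∧d}` counts pairs `i < k` with `C_1(i) > C_1(k)` and
`C_1(k) > C_2(i)`, and `N_{a∧a}` counts pairs satisfying neither condition. -/
theorem two_column_statistic (n p : ℕ) (C1 C2 : ℕ → ℕ)
    (hC1 : ∀ i ∈ Finset.Icc 1 p, C1 i ∈ Finset.Icc 1 n)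
    (hC2 : ∀ i ∈ Finset.Icc 1 p, C2 i ∈ Finset.Icc 1 n)
    (hna : ∀ u ∈ cells2 p p, ∀ v ∈ cells2 p p, attack u v → entry2 C2 C1 u ≠ entry2 C2 C1 v) :
    (p.choose 2 : ℤ) - inv2 C2 C1 p p
        - (∑ i ∈ (Finset.Icc 1 p).filter fun i => C2 i < C1 i, ((p : ℤ) - (i : ℤ)))
        + (invColumn C2 p : ℤ)
      = ((((Finset.Icc 1 p) ×ˢ (Finset.Icc 1 p)).filter fun x =>
            x.1 < x.2 ∧ ¬ C1 x.2 < C1 x.1 ∧ ¬ C2 x.1 < C1 x.2).card : ℤ)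
        - ((((Finset.Icc 1 p) ×ˢ (Finset.Icc 1 p)).filter fun x =>
            x.1 < x.2 ∧ C1 x.2 < C1 x.1 ∧ C2 x.1 < C1 x.2).card : ℤ) := by
  classical
  set U := (Finset.Icc 1 p) ×ˢ (Finset.Icc 1 p) with hU
  have hdec := invPairs2_decomp p C1 C2
  have htot := card_lt_pairs p
  have h1 := split3' U (fun x : ℕ × ℕ => x.1 < x.2) (fun x => C1 x.2 < C1 x.1)
    (fun x => C2 x.1 < C1 x.2)
  have h0 := split2' U (fun x : ℕ × ℕ => x.1 < x.2) (fun x => C1 x.2 < C1 x.1)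
  have h2 := split3' U (fun x : ℕ × ℕ => x.1 < x.2) (fun x => ¬ C1 x.2 < C1 x.1)
    (fun x => C2 x.1 < C1 x.2)
  have h3 := split3' U (fun x : ℕ × ℕ => x.1 < x.2) (fun x => C2 x.1 < C1 x.2)
    (fun x => C1 x.2 < C1 x.1)
  have e1 : (U.filter fun x => x.1 < x.2 ∧ C2 x.1 < C1 x.2 ∧ C1 x.2 < C1 x.1)
      = (U.filter fun x => x.1 < x.2 ∧ C1 x.2 < C1 x.1 ∧ C2 x.1 < C1 x.2) :=
    Finset.filter_congr fun x _ => by tauto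
  have e2 : (U.filter fun x => x.1 < x.2 ∧ C2 x.1 < C1 x.2 ∧ ¬ C1 x.2 < C1 x.1)
      = (U.filter fun x => x.1 < x.2 ∧ ¬ C1 x.2 < C1 x.1 ∧ C2 x.1 < C1 x.2) :=
    Finset.filter_congr fun x _ => by tauto
  rw [e1, e2] at h3
  rw [inv2]
  rw [hdec]
  rw [invColumn]
  push_cast
  rw [← hU] at htot ⊢
  omega

end Compress
end
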